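/- Let $G^{\triangle}_t$ be the star triangle obtained by joining $t \geq 1$ triangles at a common vertex $x_v$, so $V = \{x_v, x_1, \ldots, x_{2t}\}$ with edges $\{x_v, x_{2k-1}\}, \{x_v, x_{2k}\}, \{x_{2k-1}, x_{2k}\}$ for $1 \leq k \leq t$. Then the Hilbert series of $S/I(G^{\triangle}_t)$ equals $\frac{(1+\lambda)^t + \lambda(1-\lambda)^{t-1}}{(1-\lambda)^t}$. -/

import Mathlib

open MvPolynomial

/-- The edge ideal of a finite simple graph. -/
noncomputable def edgeIdeal (K : Type) [Field K] {V : Type} (G : SimpleGraph V) :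
    Ideal (MvPolynomial V K) :=
  Ideal.span {p | ∃ v w, G.Adj v w ∧ p = X v * X w}

/-- The Hilbert series of `S/I`, where `S = K[x_v : v ∈ σ]`:
the power series whose `d`-th coefficient is the `K`-dimension of the degree-`d`
graded piece of `S/I` (the image of the homogeneous polynomials of degree `d`). -/
noncomputable def hilbertSeries (K : Type) [Field K] {σ : Type} [Fintype σ]
    (I : Ideal (MvPolynomial σ K)) : PowerSeries ℚ :=
  PowerSeries.mk fun d =>
    (Module.finrank K ((MvPolynomial.homogeneousSubmodule σ K d).map
      (Ideal.Quotient.mkₐ K I).toLinearMap) : ℚ)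

/-- The star triangle: `t` triangles `{0, 2k-1, 2k}` (`1 ≤ k ≤ t`) joined at the
common vertex `0`. -/
def starTriangle (t : ℕ) : SimpleGraph (Fin (2 * t + 1)) :=
  SimpleGraph.fromRel fun a b => a = 0 ∨ ((a : ℕ) + 1) / 2 = ((b : ℕ) + 1) / 2

open Finset
theorem monomial_mem_span_iff {K : Type} [Field K] {σ : Type} (E : Set (σ →₀ ℕ)) (m : σ →₀ ℕ)
    (c : K) (hc : c ≠ 0) :
    (monomial m c : MvPolynomial σ K) ∈ Ideal.span ((fun s => monomial s (1:K)) '' E) ↔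
      ∃ e ∈ E, e ≤ m := by
  classical
  rw [mem_ideal_span_monomial_image]
  constructor
  · intro h
    exact h m (by simp [coeff_monomial, hc])
  · rintro ⟨e, he, hle⟩ xi hxi
    rw [mem_support_iff, coeff_monomial] at hxi
    by_cases hmx : m = xi
    · exact ⟨e, he, hmx ▸ hle⟩
    · simp [hmx] at hxi

theorem finrank_graded_piece (K : Type) [Field K] {σ : Type} [Fintype σ]
    (E : Set (σ →₀ ℕ)) (d : ℕ) (T : Finset (σ →₀ ℕ))
    (hT : ∀ m : σ →₀ ℕ, m ∈ T ↔ (m.degree = d ∧ ¬ ∃ e ∈ E, e ≤ m)) :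
    Module.finrank K ((MvPolynomial.homogeneousSubmodule σ K d).map
      (Ideal.Quotient.mkₐ K (Ideal.span ((fun s => monomial s (1:K)) '' E))).toLinearMap)
      = T.card := by
  classical
  set I : Ideal (MvPolynomial σ K) := Ideal.span ((fun s => monomial s (1:K)) '' E) with hI
  set f := (Ideal.Quotient.mkₐ K I).toLinearMap with hf
  set b : T → (MvPolynomial σ K ⧸ I) := fun m => f (monomial (m : σ →₀ ℕ) 1) with hb
  have hfm : ∀ (m : σ →₀ ℕ) (c : K), f (monomial m c) = c • f (monomial m 1) := by
    intro m c
    rw [← map_smul, smul_monomial, smul_eq_mul, mul_one]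
  have hker : ∀ p : MvPolynomial σ K, f p = 0 ↔ p ∈ I := by
    intro p
    exact Ideal.Quotient.eq_zero_iff_mem
  have hind : LinearIndependent K b := by
    rw [linearIndependent_iff]
    intro l hl
    set q : MvPolynomial σ K := ∑ m ∈ l.support, monomial (m : σ →₀ ℕ) (l m) with hq
    have hmk : f q = 0 := by
      rw [hq, map_sum]
      rw [Finsupp.linearCombination_apply, Finsupp.sum] at hl
      rw [← hl]
      exact Finset.sum_congr rfl fun m hm => hfm _ _
    rw [hker] at hmk
    refine Finsupp.ext fun m => ?_
    by_contra hlm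
    have hcoeff : q.coeff (m : σ →₀ ℕ) = l m := by
      rw [hq, coeff_sum]
      rw [Finset.sum_eq_single m]
      · rw [coeff_monomial, if_pos rfl]
      · intro m' _ hne
        rw [coeff_monomial, if_neg (fun h => hne (Subtype.ext h))]
      · intro h
        exact absurd (Finsupp.notMem_support_iff.1 h) hlm
    have hmem : (m : σ →₀ ℕ) ∈ q.support := by
      rw [mem_support_iff, hcoeff]; exact hlm
    rw [hI, mem_ideal_span_monomial_image] at hmk
    obtain ⟨e, he, hle⟩ := hmk _ hmem
    exact ((hT m).1 m.2).2 ⟨e, he, hle⟩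
  have hspan : (MvPolynomial.homogeneousSubmodule σ K d).map f = Submodule.span K (Set.range b) := by
    apply le_antisymm
    · rintro x ⟨p, hp, rfl⟩
      rw [← p.support_sum_monomial_coeff, map_sum]
      apply Submodule.sum_mem
      intro m hm
      by_cases hgood : ∃ e ∈ E, e ≤ m
      · have h0 : (monomial m (coeff m p) : MvPolynomial σ K) ∈ I := by
          rw [hI, monomial_mem_span_iff E m _ (mem_support_iff.1 hm)]
          exact hgood
        rw [← hker] at h0
        rw [h0]
        exact Submodule.zero_mem _
      · have hdeg : m.degree = d := by
          have hp' : MvPolynomial.IsHomogeneous p d := hp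
          rw [Finsupp.degree_eq_weight_one]
          exact hp' (mem_support_iff.1 hm)
        have hmT : m ∈ T := (hT m).2 ⟨hdeg, hgood⟩
        rw [hfm]
        exact Submodule.smul_mem _ _ (Submodule.subset_span ⟨⟨m, hmT⟩, rfl⟩)
    · rw [Submodule.span_le]
      rintro x ⟨m, rfl⟩
      exact ⟨monomial (m : σ →₀ ℕ) 1, (mem_homogeneousSubmodule _ _).2
        (isHomogeneous_monomial 1 ((hT m).1 m.2).1), rfl⟩
  rw [hspan, finrank_span_eq_card hind, Fintype.card_coe]
def stv1' (t : ℕ) (i : Fin t) : Fin (2 * t + 1) := ⟨2 * (i : ℕ) + 1, by omega⟩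
def stv2' (t : ℕ) (i : Fin t) : Fin (2 * t + 1) := ⟨2 * (i : ℕ) + 2, by omega⟩

theorem edgeIdeal_eq_span (K : Type) [Field K] {V : Type} (G : SimpleGraph V) :
    edgeIdeal K G = Ideal.span ((fun s => monomial s (1:K)) ''
      {s | ∃ v w, G.Adj v w ∧ s = Finsupp.single v 1 + Finsupp.single w 1}) := by
  unfold edgeIdeal
  congr 1
  ext p
  constructor
  · rintro ⟨v, w, hadj, rfl⟩
    exact ⟨Finsupp.single v 1 + Finsupp.single w 1, ⟨v, w, hadj, rfl⟩,
      by rw [X, X, monomial_mul, one_mul]⟩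
  · rintro ⟨s, ⟨v, w, hadj, rfl⟩, rfl⟩
    exact ⟨v, w, hadj, by rw [X, X, monomial_mul, one_mul]⟩


theorem starTriangle_adj (t : ℕ) (a b : Fin (2 * t + 1)) :
    (starTriangle t).Adj a b ↔ a ≠ b ∧ (a = 0 ∨ b = 0 ∨
      ∃ i : Fin t, (a = stv1' t i ∧ b = stv2' t i) ∨ (a = stv2' t i ∧ b = stv1' t i)) := by
  rw [starTriangle, SimpleGraph.fromRel_adj]
  constructor
  · rintro ⟨hne, h⟩
    refine ⟨hne, ?_⟩
    have hval : (a : ℕ) ≠ (b : ℕ) := fun h' => hne (Fin.ext h')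
    have h0a : (a : ℕ) = 0 ∨ (b : ℕ) = 0 ∨ ((a:ℕ)+1)/2 = ((b:ℕ)+1)/2 := by
      rcases h with h | h
      · rcases h with h | h
        · left; exact congrArg Fin.val h ▸ rfl
        · right; right; exact h
      · rcases h with h | h
        · right; left; exact congrArg Fin.val h ▸ rfl
        · right; right; exact h.symm
    rcases h0a with h0 | h0 | h0
    · left; exact Fin.ext (by simpa using h0)
    · right; left; exact Fin.ext (by simpa using h0)
    · by_cases ha0 : (a : ℕ) = 0
      · left; exact Fin.ext (by simpa using ha0)
      by_cases hb0 : (b : ℕ) = 0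
      · right; left; exact Fin.ext (by simpa using hb0)
      · right; right
        have hat : (a : ℕ) < 2 * t + 1 := a.isLt
        have hbt : (b : ℕ) < 2 * t + 1 := b.isLt
        have hi : ((a:ℕ)+1)/2 - 1 < t := by omega
        refine ⟨⟨((a:ℕ)+1)/2 - 1, hi⟩, ?_⟩
        have : ((a:ℕ) = 2 * (((a:ℕ)+1)/2 - 1) + 1 ∧ (b:ℕ) = 2 * (((a:ℕ)+1)/2 - 1) + 2) ∨
            ((a:ℕ) = 2 * (((a:ℕ)+1)/2 - 1) + 2 ∧ (b:ℕ) = 2 * (((a:ℕ)+1)/2 - 1) + 1) := by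
          omega
        rcases this with ⟨h1, h2⟩ | ⟨h1, h2⟩
        · left; exact ⟨Fin.ext h1, Fin.ext h2⟩
        · right; exact ⟨Fin.ext h1, Fin.ext h2⟩
  · rintro ⟨hne, h⟩
    refine ⟨hne, ?_⟩
    rcases h with rfl | rfl | ⟨i, ⟨rfl, rfl⟩ | ⟨rfl, rfl⟩⟩
    · left; left; rfl
    · right; left; rfl
    · left; right
      show (2 * (i:ℕ) + 1 + 1) / 2 = (2 * (i:ℕ) + 2 + 1) / 2
      omega
    · left; right
      show (2 * (i:ℕ) + 2 + 1) / 2 = (2 * (i:ℕ) + 1 + 1) / 2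
      omega

theorem single_add_single_le {σ : Type} (v w : σ) (hvw : v ≠ w) (m : σ →₀ ℕ) :
    Finsupp.single v 1 + Finsupp.single w 1 ≤ m ↔ 1 ≤ m v ∧ 1 ≤ m w := by
  classical
  rw [Finsupp.le_def]
  constructor
  · intro h
    constructor
    · have := h v
      simpa [Finsupp.single_apply, hvw, Ne.symm hvw] using this
    · have := h w
      simpa [Finsupp.single_apply, hvw, Ne.symm hvw] using this
  · rintro ⟨h1, h2⟩ s
    rcases eq_or_ne s v with rfl | hsv
    · simpa [Finsupp.single_apply, hvw, Ne.symm hvw] using h1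
    rcases eq_or_ne s w with rfl | hsw
    · simpa [Finsupp.single_apply, hvw, Ne.symm hvw] using h2
    · simp [Finsupp.single_apply, Ne.symm hsv, Ne.symm hsw]

/-- The good condition characterization for the star triangle. -/
theorem good_iff (t : ℕ) (m : Fin (2 * t + 1) →₀ ℕ) :
    (¬ ∃ e ∈ {s | ∃ v w, (starTriangle t).Adj v w ∧ s = Finsupp.single v 1 + Finsupp.single w 1},
        e ≤ m) ↔
      ((∀ j, j ≠ 0 → m 0 = 0 ∨ m j = 0) ∧ ∀ i : Fin t, m (stv1' t i) = 0 ∨ m (stv2' t i) = 0) := by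
  have key : (∃ e ∈ {s | ∃ v w, (starTriangle t).Adj v w ∧
      s = Finsupp.single v 1 + Finsupp.single w 1}, e ≤ m) ↔
      ∃ v w, (starTriangle t).Adj v w ∧ 1 ≤ m v ∧ 1 ≤ m w := by
    constructor
    · rintro ⟨e, ⟨v, w, hadj, rfl⟩, hle⟩
      exact ⟨v, w, hadj, (single_add_single_le v w hadj.ne m).1 hle⟩
    · rintro ⟨v, w, hadj, h1, h2⟩
      exact ⟨_, ⟨v, w, hadj, rfl⟩, (single_add_single_le v w hadj.ne m).2 ⟨h1, h2⟩⟩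
  rw [key]
  push_neg
  constructor
  · intro h
    constructor
    · intro j hj
      have hadj : (starTriangle t).Adj 0 j := by
        rw [starTriangle_adj]
        exact ⟨Ne.symm hj, Or.inl rfl⟩
      have := h 0 j hadj
      omega
    · intro i
      have hne : stv1' t i ≠ stv2' t i := by
        intro h'
        have := congrArg Fin.val h'
        simp [stv1', stv2'] at this
      have hadj : (starTriangle t).Adj (stv1' t i) (stv2' t i) := by
        rw [starTriangle_adj]
        exact ⟨hne, Or.inr (Or.inr ⟨i, Or.inl ⟨rfl, rfl⟩⟩)⟩
      have := h _ _ hadj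
      omega
  · rintro ⟨h0, hp⟩ v w hadj h1
    rw [starTriangle_adj] at hadj
    obtain ⟨hne, hc⟩ := hadj
    rcases hc with rfl | rfl | ⟨i, ⟨rfl, rfl⟩ | ⟨rfl, rfl⟩⟩
    · rcases h0 w (Ne.symm hne) with h | h
      · omega
      · omega
    · rcases h0 v hne with h | h
      · omega
      · omega
    · rcases hp i with h | h
      · omega
      · omega
    · rcases hp i with h | h
      · omega
      · omega


theorem nat_sum_decomp (t : ℕ) (G : ℕ → ℕ) :
    ∑ j ∈ range (2 * t + 1), G j = G 0 + ∑ i ∈ range t, (G (2 * i + 1) + G (2 * i + 2)) := by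
  induction t with
  | zero => simp
  | succ n ih =>
    have h : 2 * (n + 1) + 1 = (2 * n + 1) + 1 + 1 := by ring
    rw [h, sum_range_succ, sum_range_succ, ih, sum_range_succ]
    ring_nf

theorem sum_decomp (t : ℕ) (g : Fin (2 * t + 1) → ℕ) :
    ∑ j, g j = g 0 + ∑ i : Fin t, (g (stv1' t i) + g (stv2' t i)) := by
  set G : ℕ → ℕ := fun j => if h : j < 2 * t + 1 then g ⟨j, h⟩ else 0 with hG
  have h1 : ∑ j, g j = ∑ j ∈ range (2 * t + 1), G j := by
    rw [← Fin.sum_univ_eq_sum_range]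
    exact Finset.sum_congr rfl fun i _ => by simp [hG, i.isLt]; intro h; have := i.isLt; omega
  have h2 : ∑ i : Fin t, (g (stv1' t i) + g (stv2' t i)) =
      ∑ i ∈ range t, (G (2 * i + 1) + G (2 * i + 2)) := by
    rw [← Fin.sum_univ_eq_sum_range (fun j => G (2 * j + 1) + G (2 * j + 2)) t]
    refine Finset.sum_congr rfl fun i _ => ?_
    have hi1 : 2 * (i : ℕ) + 1 < 2 * t + 1 := by omega
    have hi2 : 2 * (i : ℕ) + 2 < 2 * t + 1 := by omega
    simp only [hG, dif_pos hi1, dif_pos hi2]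
    rfl
  have h0 : g 0 = G 0 := by simp [hG]
  rw [h1, nat_sum_decomp, ← h2, ← h0]

theorem degree_eq_univ_sum {t : ℕ} (m : Fin (2 * t + 1) →₀ ℕ) :
    m.degree = ∑ j, m j :=
  Finset.sum_subset (Finset.subset_univ _) fun j _ hj => Finsupp.notMem_support_iff.1 hj

def aN (n : ℕ) : ℕ := if n = 0 then 1 else 2

def Pset (n : ℕ) : Finset (ℕ × ℕ) := (Finset.HasAntidiagonal.antidiagonal n).filter (fun p => p.1 = 0 ∨ p.2 = 0)

theorem mem_Pset {n : ℕ} {p : ℕ × ℕ} : p ∈ Pset n ↔ p.1 + p.2 = n ∧ (p.1 = 0 ∨ p.2 = 0) := by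
  simp [Pset]

theorem card_Pset (n : ℕ) : (Pset n).card = aN n := by
  rcases n with _ | n
  · have : Pset 0 = {(0,0)} := by
      ext p
      rw [mem_Pset]
      simp [Prod.ext_iff]
      omega
    rw [this]
    rfl
  · have : Pset (n+1) = {((0 : ℕ), n+1), (n+1, 0)} := by
      ext p
      rw [mem_Pset]
      simp [Prod.ext_iff]
      omega
    rw [this]
    rw [Finset.card_insert_of_notMem (by simp), Finset.card_singleton]
    rfl

theorem stv1_ne_zero {t : ℕ} (i : Fin t) : stv1' t i ≠ 0 := by
  intro h
  have := congrArg Fin.val h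
  simp [stv1'] at this

theorem stv2_ne_zero {t : ℕ} (i : Fin t) : stv2' t i ≠ 0 := by
  intro h
  have := congrArg Fin.val h
  simp [stv2'] at this

theorem stv1_ne_stv2 {t : ℕ} (i i' : Fin t) : stv1' t i ≠ stv2' t i' := by
  intro h
  have := congrArg Fin.val h
  simp only [stv1', stv2'] at this
  omega

theorem stv1_inj {t : ℕ} {i i' : Fin t} (h : stv1' t i = stv1' t i') : i = i' := by
  have := congrArg Fin.val h
  simp only [stv1', stv2'] at this
  exact Fin.ext (by omega)

theorem stv2_inj {t : ℕ} {i i' : Fin t} (h : stv2' t i = stv2' t i') : i = i' := by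
  have := congrArg Fin.val h
  simp only [stv1', stv2'] at this
  exact Fin.ext (by omega)

theorem fin_cases3 (t : ℕ) (j : Fin (2 * t + 1)) :
    j = 0 ∨ ∃ i : Fin t, j = stv1' t i ∨ j = stv2' t i := by
  rcases Nat.eq_zero_or_pos (j : ℕ) with h | h
  · left; exact Fin.ext (by simp [h])
  · right
    have hj : (j : ℕ) < 2 * t + 1 := j.isLt
    refine ⟨⟨((j : ℕ) - 1) / 2, by omega⟩, ?_⟩
    have h' : (j:ℕ) = 2*((((j:ℕ)-1)/2)) + 1 ∨ (j:ℕ) = 2*((((j:ℕ)-1)/2)) + 2 := by omega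
    rcases h' with h' | h'
    · left; exact Fin.ext h'
    · right; exact Fin.ext h'

noncomputable def psi (t : ℕ) (g : Fin t → ℕ × ℕ) : Fin (2 * t + 1) →₀ ℕ :=
  ∑ i : Fin t, (Finsupp.single (stv1' t i) (g i).1 + Finsupp.single (stv2' t i) (g i).2)

theorem psi_apply (t : ℕ) (g : Fin t → ℕ × ℕ) (j : Fin (2 * t + 1)) :
    psi t g j = ∑ i : Fin t, ((if stv1' t i = j then (g i).1 else 0) +
      (if stv2' t i = j then (g i).2 else 0)) := by
  rw [psi, Finsupp.finset_sum_apply]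
  refine Finset.sum_congr rfl fun i _ => ?_
  rw [Finsupp.add_apply, Finsupp.single_apply, Finsupp.single_apply]

theorem psi_apply_zero (t : ℕ) (g : Fin t → ℕ × ℕ) : psi t g 0 = 0 := by
  rw [psi_apply]
  refine Finset.sum_eq_zero fun i _ => ?_
  rw [if_neg (stv1_ne_zero i), if_neg (stv2_ne_zero i)]
  omega

theorem psi_apply_v1 (t : ℕ) (g : Fin t → ℕ × ℕ) (i : Fin t) :
    psi t g (stv1' t i) = (g i).1 := by
  rw [psi_apply]
  rw [Finset.sum_eq_single i]
  · rw [if_pos rfl, if_neg (stv1_ne_stv2 i i).symm]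
    omega
  · intro i' _ hne
    rw [if_neg (fun h => hne (stv1_inj h)), if_neg (stv1_ne_stv2 i i').symm]
    omega
  · intro h
    exact absurd (Finset.mem_univ i) h

theorem psi_apply_v2 (t : ℕ) (g : Fin t → ℕ × ℕ) (i : Fin t) :
    psi t g (stv2' t i) = (g i).2 := by
  rw [psi_apply]
  rw [Finset.sum_eq_single i]
  · rw [if_pos rfl, if_neg (stv1_ne_stv2 i i)]
    omega
  · intro i' _ hne
    rw [if_neg (stv1_ne_stv2 i' i), if_neg (fun h => hne (stv2_inj h))]
    omega
  · intro h
    exact absurd (Finset.mem_univ i) h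

theorem card_good (t d : ℕ) (T : Finset (Fin (2 * t + 1) →₀ ℕ))
    (hT : ∀ m : Fin (2 * t + 1) →₀ ℕ, m ∈ T ↔ (m.degree = d ∧
      ((∀ j, j ≠ 0 → m 0 = 0 ∨ m j = 0) ∧
       ∀ i : Fin t, m (stv1' t i) = 0 ∨ m (stv2' t i) = 0))) :
    T.card = (if d = 0 then 0 else 1) +
      ∑ l ∈ finsuppAntidiag (univ : Finset (Fin t)) d, ∏ i : Fin t, aN (l i) := by
  classical
  rw [← Finset.card_filter_add_card_filter_not (s := T) (p := fun m => m 0 ≠ 0)]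
  congr 1
  -- part with m 0 ≠ 0
  · by_cases hd : d = 0
    · subst hd
      rw [if_pos rfl, Finset.card_eq_zero]
      rw [Finset.filter_eq_empty_iff]
      intro m hm
      have h0 : m = 0 := (Finsupp.degree_eq_zero_iff m).1 ((hT m).1 hm).1
      simp [h0]
    · rw [if_neg hd]
      have : T.filter (fun m => m 0 ≠ 0) = {Finsupp.single 0 d} := by
        ext m
        rw [Finset.mem_filter, Finset.mem_singleton]
        constructor
        · rintro ⟨hmT, hm0⟩
          obtain ⟨hdeg, h1, _⟩ := (hT m).1 hmT
          have hzero : ∀ j, j ≠ 0 → m j = 0 := fun j hj => (h1 j hj).resolve_left hm0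
          have hsum : m.degree = m 0 := by
            rw [degree_eq_univ_sum, sum_decomp]
            have : ∑ i : Fin t, (m (stv1' t i) + m (stv2' t i)) = 0 := by
              refine Finset.sum_eq_zero fun i _ => ?_
              rw [hzero _ (stv1_ne_zero i), hzero _ (stv2_ne_zero i)]
              omega
            omega
          refine Finsupp.ext fun j => ?_
          rcases eq_or_ne j 0 with rfl | hj
          · rw [Finsupp.single_eq_same, ← hdeg, hsum]
          · rw [hzero j hj, Finsupp.single_apply, if_neg (Ne.symm hj)]
        · rintro rfl
          have hs0 : (Finsupp.single (0 : Fin (2*t+1)) d) 0 = d := Finsupp.single_eq_same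
          refine ⟨(hT _).2 ⟨?_, ?_, ?_⟩, by rw [hs0]; exact hd⟩
          · rw [degree_eq_univ_sum, sum_decomp, hs0]
            have : ∑ i : Fin t, ((Finsupp.single (0 : Fin (2*t+1)) d) (stv1' t i) +
                (Finsupp.single (0 : Fin (2*t+1)) d) (stv2' t i)) = 0 := by
              refine Finset.sum_eq_zero fun i _ => ?_
              rw [Finsupp.single_apply, if_neg (Ne.symm (stv1_ne_zero i)),
                Finsupp.single_apply, if_neg (Ne.symm (stv2_ne_zero i))]
              omega
            omega
          · intro j hj
            right
            rw [Finsupp.single_apply, if_neg (Ne.symm hj)]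
          · intro i
            left
            rw [Finsupp.single_apply, if_neg (Ne.symm (stv1_ne_zero i))]
      rw [this, Finset.card_singleton]
  -- part with m 0 = 0
  · set Φ : (Fin (2 * t + 1) →₀ ℕ) → (Fin t →₀ ℕ) :=
      fun m => Finsupp.equivFunOnFinite.symm (fun i : Fin t => m (stv1' t i) + m (stv2' t i))
      with hΦ
    have hΦ_apply : ∀ m i, Φ m i = m (stv1' t i) + m (stv2' t i) := by
      intro m i
      rw [hΦ]
      rfl
    have hmem : ∀ m ∈ T.filter (fun m => ¬ m 0 ≠ 0), Φ m ∈ finsuppAntidiag (univ : Finset (Fin t)) d := by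
      intro m hm
      rw [Finset.mem_filter, not_not] at hm
      obtain ⟨hmT, hm0⟩ := hm
      rw [mem_finsuppAntidiag]
      refine ⟨?_, Finset.subset_univ _⟩
      have hdeg := ((hT m).1 hmT).1
      rw [degree_eq_univ_sum, sum_decomp, hm0] at hdeg
      rw [← hdeg]
      simp only [hΦ_apply]
      omega
    rw [Finset.card_eq_sum_card_fiberwise hmem]
    refine Finset.sum_congr rfl fun l hl => ?_
    rw [mem_finsuppAntidiag] at hl
    have hcard : (Fintype.piFinset fun i : Fin t => Pset (l i)).card = ∏ i : Fin t, aN (l i) := by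
      rw [Fintype.card_piFinset]
      exact Finset.prod_congr rfl fun i _ => card_Pset (l i)
    rw [← hcard]
    refine Finset.card_nbij' (fun m => fun i => (m (stv1' t i), m (stv2' t i)))
        (fun g => psi t g) ?_ ?_ ?_ ?_
    · intro m hm
      rw [Finset.mem_coe, Finset.mem_filter, Finset.mem_filter, not_not] at hm
      obtain ⟨⟨hmT, hm0⟩, hΦm⟩ := hm
      obtain ⟨_, _, h2⟩ := (hT m).1 hmT
      rw [Finset.mem_coe, Fintype.mem_piFinset]
      intro i
      rw [mem_Pset]
      refine ⟨?_, h2 i⟩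
      rw [← hΦ_apply, hΦm]
    · intro g hg
      rw [Finset.mem_coe, Fintype.mem_piFinset] at hg
      have hg' : ∀ i, (g i).1 + (g i).2 = l i ∧ ((g i).1 = 0 ∨ (g i).2 = 0) :=
        fun i => mem_Pset.1 (hg i)
      rw [Finset.mem_coe, Finset.mem_filter, Finset.mem_filter, not_not]
      refine ⟨⟨(hT _).2 ⟨?_, ?_, ?_⟩, psi_apply_zero t g⟩, ?_⟩
      · rw [degree_eq_univ_sum, sum_decomp, psi_apply_zero]
        have : ∑ i : Fin t, (psi t g (stv1' t i) + psi t g (stv2' t i)) = ∑ i : Fin t, l i := by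
          refine Finset.sum_congr rfl fun i _ => ?_
          rw [psi_apply_v1, psi_apply_v2, (hg' i).1]
        rw [this]
        rw [zero_add]
        exact hl.1
      · intro j hj
        left
        exact psi_apply_zero t g
      · intro i
        rw [psi_apply_v1, psi_apply_v2]
        exact (hg' i).2
      · refine Finsupp.ext fun i => ?_
        rw [hΦ_apply, psi_apply_v1, psi_apply_v2, (hg' i).1]
    · intro m hm
      rw [Finset.mem_coe, Finset.mem_filter, Finset.mem_filter, not_not] at hm
      obtain ⟨⟨hmT, hm0⟩, hΦm⟩ := hm
      refine Finsupp.ext fun j => ?_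
      rcases fin_cases3 t j with rfl | ⟨i, rfl | rfl⟩
      · rw [psi_apply_zero, hm0]
      · rw [psi_apply_v1]
      · rw [psi_apply_v2]
    · intro g hg
      funext i
      exact Prod.ext (psi_apply_v1 t _ i) (psi_apply_v2 t _ i)

theorem L1 : PowerSeries.mk (fun n => if n = 0 then (1:ℚ) else 2) * (1 - PowerSeries.X) =
    1 + PowerSeries.X := by
  have h : PowerSeries.mk (fun n => if n = 0 then (1:ℚ) else 2) * (1 - PowerSeries.X) =
      PowerSeries.mk (fun n => if n = 0 then (1:ℚ) else 2) -
      PowerSeries.mk (fun n => if n = 0 then (1:ℚ) else 2) * PowerSeries.X := by ring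
  rw [h]
  ext n
  rcases n with _ | n
  · simp
  · rcases n with _ | n
    · simp [PowerSeries.coeff_succ_mul_X]
      norm_num
    · simp [PowerSeries.coeff_succ_mul_X, PowerSeries.coeff_one, PowerSeries.coeff_X]

theorem L2 : PowerSeries.mk (fun n => if n = 0 then (0:ℚ) else 1) * (1 - PowerSeries.X) =
    PowerSeries.X := by
  have h : PowerSeries.mk (fun n => if n = 0 then (0:ℚ) else 1) * (1 - PowerSeries.X) =
      PowerSeries.mk (fun n => if n = 0 then (0:ℚ) else 1) -
      PowerSeries.mk (fun n => if n = 0 then (0:ℚ) else 1) * PowerSeries.X := by ring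
  rw [h]
  ext n
  rcases n with _ | n
  · simp
  · rcases n with _ | n
    · simp [PowerSeries.coeff_succ_mul_X, PowerSeries.coeff_X]
    · simp [PowerSeries.coeff_succ_mul_X, PowerSeries.coeff_X]


theorem L3 (t d : ℕ) :
    (PowerSeries.coeff d) ((PowerSeries.mk (fun n => if n = 0 then (1:ℚ) else 2)) ^ t) =
    ((∑ l ∈ Finset.finsuppAntidiag (Finset.univ : Finset (Fin t)) d,
      ∏ i : Fin t, aN (l i) : ℕ) : ℚ) := by
  have hpow : (PowerSeries.mk (fun n => if n = 0 then (1:ℚ) else 2)) ^ t =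
      ∏ _i : Fin t, PowerSeries.mk (fun n => if n = 0 then (1:ℚ) else 2) := by
    rw [Finset.prod_const, Finset.card_univ, Fintype.card_fin]
  rw [hpow, PowerSeries.coeff_prod]
  push_cast
  refine Finset.sum_congr rfl fun l _ => Finset.prod_congr rfl fun i _ => ?_
  rw [PowerSeries.coeff_mk, aN]
  split_ifs <;> norm_num
/-- The Hilbert series of `S/I(G^△_t)` (star triangle with `t ≥ 1` triangles) equals
`((1+λ)^t + λ(1-λ)^(t-1)) / (1-λ)^t`. -/
theorem hilbertSeries_starTriangle (K : Type) [Field K] (t : ℕ) (ht : 1 ≤ t) :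
    hilbertSeries K (edgeIdeal K (starTriangle t)) * (1 - PowerSeries.X) ^ t =
      (1 + PowerSeries.X) ^ t + PowerSeries.X * (1 - PowerSeries.X) ^ (t - 1) := by
  classical
  have key : hilbertSeries K (edgeIdeal K (starTriangle t)) =
      PowerSeries.mk (fun n => if n = 0 then (1:ℚ) else 2) ^ t +
      PowerSeries.mk (fun n => if n = 0 then (0:ℚ) else 1) := by
    ext d
    rw [edgeIdeal_eq_span K (starTriangle t)]
    simp only [hilbertSeries, PowerSeries.coeff_mk]
    set E : Set (Fin (2 * t + 1) →₀ ℕ) :=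
      {s | ∃ v w, (starTriangle t).Adj v w ∧ s = Finsupp.single v 1 + Finsupp.single w 1} with hE
    set T : Finset (Fin (2 * t + 1) →₀ ℕ) :=
      (Finset.finsuppAntidiag (Finset.univ : Finset (Fin (2 * t + 1))) d).filter
        (fun m => ¬ ∃ e ∈ E, e ≤ m) with hTdef
    have hT : ∀ m : Fin (2 * t + 1) →₀ ℕ, m ∈ T ↔ (m.degree = d ∧ ¬ ∃ e ∈ E, e ≤ m) := by
      intro m
      rw [hTdef, Finset.mem_filter, Finset.mem_finsuppAntidiag]
      constructor
      · rintro ⟨⟨hsum, _⟩, hgood⟩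
        exact ⟨by rw [Finsupp.degree, ← hsum]
                  exact (Finset.sum_subset (Finset.subset_univ _)
                    fun j _ hj => Finsupp.notMem_support_iff.1 hj), hgood⟩
      · rintro ⟨hdeg, hgood⟩
        refine ⟨⟨?_, Finset.subset_univ _⟩, hgood⟩
        rw [← hdeg, Finsupp.degree]
        exact (Finset.sum_subset (Finset.subset_univ _)
          fun j _ hj => Finsupp.notMem_support_iff.1 hj).symm
    rw [finrank_graded_piece K E d T hT]
    have hT' : ∀ m : Fin (2 * t + 1) →₀ ℕ, m ∈ T ↔ (m.degree = d ∧
        ((∀ j, j ≠ 0 → m 0 = 0 ∨ m j = 0) ∧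
         ∀ i : Fin t, m (stv1' t i) = 0 ∨ m (stv2' t i) = 0)) := by
      intro m
      rw [hT m, and_congr_right_iff]
      intro _
      exact good_iff t m
    rw [card_good t d T hT']
    rw [map_add, L3, PowerSeries.coeff_mk]
    push_cast
    ring
  rw [key, add_mul]
  have h1 : (PowerSeries.mk (fun n => if n = 0 then (1:ℚ) else 2)) ^ t
      * (1 - PowerSeries.X) ^ t = (1 + PowerSeries.X) ^ t := by
    rw [← mul_pow, L1]
  have h2 : (PowerSeries.mk (fun n => if n = 0 then (0:ℚ) else 1)) * (1 - PowerSeries.X) ^ t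
      = PowerSeries.X * (1 - PowerSeries.X) ^ (t - 1) := by
    have ht' : t = (t - 1) + 1 := by omega
    rw [ht', pow_succ]
    rw [Nat.add_sub_cancel]
    calc (PowerSeries.mk (fun n => if n = 0 then (0:ℚ) else 1)) *
          ((1 - PowerSeries.X) ^ (t-1) * (1 - PowerSeries.X))
        = ((PowerSeries.mk (fun n => if n = 0 then (0:ℚ) else 1)) * (1 - PowerSeries.X)) *
          (1 - PowerSeries.X) ^ (t-1) := by ring
      _ = PowerSeries.X * (1 - PowerSeries.X) ^ (t - 1) := by rw [L2]
  rw [h1, h2]
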